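/- Let x₁,...,x_n ∈ ℝ^m be samples at times 0 < t₁ < ... < t_n of a zero-mean process with E[x_i x_jᵀ] = min(t_i,t_j)(α − max(t_i,t_j)β). Then the estimator α̂ = (1/(n−1)) Σ_{i=1}^{n−1} (t_{i+1}x_i − t_i x_{i+1})(t_{i+1}x_i − t_i x_{i+1})ᵀ / (t_i t_{i+1}(t_{i+1} − t_i)) satisfies E[α̂] = α. -/

import Mathlib

open MeasureTheory

theorem stmt_13 {Ω : Type*} [MeasurableSpace Ω] (μ : Measure Ω) [IsProbabilityMeasure μ]
    {m : ℕ} (n : ℕ) (hn : 2 ≤ n)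
    (t : ℕ → ℝ) (ht0 : 0 < t 0) (htmono : ∀ i j, i < j → j < n → t i < t j)
    (α β : Matrix (Fin m) (Fin m) ℝ)
    (X : ℕ → Ω → Fin m → ℝ)
    (hmean : ∀ i < n, ∀ k, ∫ ω, X i ω k ∂μ = 0)
    (hint : ∀ i < n, ∀ j < n, ∀ k l, Integrable (fun ω => X i ω k * X j ω l) μ)
    (hcov : ∀ i < n, ∀ j < n, ∀ k l,
      ∫ ω, X i ω k * X j ω l ∂μ
        = min (t i) (t j) * α k l - (min (t i) (t j) * max (t i) (t j)) * β k l)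
    (αhat : Ω → Matrix (Fin m) (Fin m) ℝ)
    (hαhat : ∀ ω k l, αhat ω k l
      = (1 / (n - 1 : ℝ)) * ∑ i ∈ Finset.range (n - 1),
          (t (i + 1) * X i ω k - t i * X (i + 1) ω k)
            * (t (i + 1) * X i ω l - t i * X (i + 1) ω l)
            / (t i * t (i + 1) * (t (i + 1) - t i))) :
    ∀ k l, ∫ ω, αhat ω k l ∂μ = α k l := by
  intro k l
  have hpos : ∀ i < n, 0 < t i := by
    intro i hi
    rcases Nat.eq_zero_or_pos i with h | h
    · simpa [h] using ht0
    · exact ht0.trans (htmono 0 i h hi)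
  set f : ℕ → Ω → ℝ := fun i ω =>
    (t (i + 1) * X i ω k - t i * X (i + 1) ω k)
      * (t (i + 1) * X i ω l - t i * X (i + 1) ω l)
      / (t i * t (i + 1) * (t (i + 1) - t i)) with hf
  have hmain : ∀ i ∈ Finset.range (n - 1),
      Integrable (f i) μ ∧ ∫ ω, f i ω ∂μ = α k l := by
    intro i hi
    rw [Finset.mem_range] at hi
    have hi1 : i < n := by omega
    have hi2 : i + 1 < n := by omega
    have ha : 0 < t i := hpos i hi1
    have hab : t i < t (i + 1) := htmono i (i + 1) (Nat.lt_succ_self i) hi2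
    have hb : 0 < t (i + 1) := ha.trans hab
    have hd : 0 < t (i + 1) - t i := sub_pos.mpr hab
    have hc : t i * t (i + 1) * (t (i + 1) - t i) ≠ 0 := by positivity
    have heq : f i = fun ω =>
        (t (i+1) * t (i+1) * (X i ω k * X i ω l)
          - t i * t (i+1) * (X i ω k * X (i+1) ω l)
          - t i * t (i+1) * (X (i+1) ω k * X i ω l)
          + t i * t i * (X (i+1) ω k * X (i+1) ω l))
        / (t i * t (i + 1) * (t (i + 1) - t i)) := by
      funext ω; rw [hf]; ring
    have I1 := hint i hi1 i hi1 k l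
    have I2 := hint i hi1 (i+1) hi2 k l
    have I3 := hint (i+1) hi2 i hi1 k l
    have I4 := hint (i+1) hi2 (i+1) hi2 k l
    have J1 : Integrable (fun ω => t (i+1) * t (i+1) * (X i ω k * X i ω l)) μ := I1.const_mul _
    have J2 : Integrable (fun ω => t i * t (i+1) * (X i ω k * X (i+1) ω l)) μ := I2.const_mul _
    have J3 : Integrable (fun ω => t i * t (i+1) * (X (i+1) ω k * X i ω l)) μ := I3.const_mul _
    have J4 : Integrable (fun ω => t i * t i * (X (i+1) ω k * X (i+1) ω l)) μ := I4.const_mul _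
    have J12 : Integrable (fun ω => t (i+1) * t (i+1) * (X i ω k * X i ω l)
        - t i * t (i+1) * (X i ω k * X (i+1) ω l)) μ := J1.sub J2
    have J123 : Integrable (fun ω => t (i+1) * t (i+1) * (X i ω k * X i ω l)
        - t i * t (i+1) * (X i ω k * X (i+1) ω l)
        - t i * t (i+1) * (X (i+1) ω k * X i ω l)) μ := J12.sub J3
    have hInt : Integrable (f i) μ := by
      rw [heq]
      exact (J123.add J4).div_const _
    refine ⟨hInt, ?_⟩
    rw [heq, integral_div, integral_add J123 J4, integral_sub J12 J3, integral_sub J1 J2,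
        integral_const_mul, integral_const_mul, integral_const_mul, integral_const_mul,
        hcov i hi1 i hi1 k l, hcov i hi1 (i+1) hi2 k l, hcov (i+1) hi2 i hi1 k l,
        hcov (i+1) hi2 (i+1) hi2 k l,
        min_eq_left hab.le, max_eq_right hab.le, min_eq_right hab.le, max_eq_left hab.le,
        min_self, max_self, min_self, max_self]
    field_simp
    ring
  have hrew : (fun ω => αhat ω k l)
      = fun ω => (1 / (n - 1 : ℝ)) * ∑ i ∈ Finset.range (n - 1), f i ω :=
    funext fun ω => hαhat ω k l
  rw [hrew, integral_const_mul, integral_finset_sum _ (fun i hi => (hmain i hi).1),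
      Finset.sum_congr rfl (fun i hi => (hmain i hi).2), Finset.sum_const,
      Finset.card_range, nsmul_eq_mul]
  have hne : (n : ℝ) - 1 ≠ 0 := by
    have : (2 : ℝ) ≤ (n : ℝ) := by exact_mod_cast hn
    linarith
  rw [Nat.cast_sub (by omega : 1 ≤ n)]
  push_cast
  field_simp
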